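/- Fix an integer p ≥ 2, an integer N ≥ 2, positive integers a_1, ..., a_N, and define ν(I) = Σ_{j=1}^r p^{i_1 + ⋯ + i_{j-1}} a_{i_j} and the weight μ(I) = i_1 + ⋯ + i_r for I ∈ {1,...,N}^r. If I and J both minimize ν over {1,...,N}^r, then |μ(I) − μ(J)| < N. -/

import Mathlib

/-- The valuation `ν(I) = ∑_{j=1}^r p^(i_1 + ⋯ + i_{j-1}) · a_{i_j}` of a tuple
`I ∈ {1,…,N}^r`, where the entry `I j : Fin N` represents the value `(I j) + 1`. -/
def tupleVal (p : ℕ) {N r : ℕ} (a : Fin N → ℕ) (I : Fin r → Fin N) : ℕ :=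
  ∑ j : Fin r, p ^ (∑ l ∈ Finset.Iio j, ((I l : ℕ) + 1)) * a (I j)

/-- The weight `μ(I) = i_1 + ⋯ + i_r` of a tuple `I ∈ {1,…,N}^r`. -/
def tupleWeight {N r : ℕ} (I : Fin r → Fin N) : ℕ :=
  ∑ j : Fin r, ((I j : ℕ) + 1)

lemma Iio_succ_eq {r : ℕ} (j : Fin r) :
    Finset.Iio (j.succ) = insert 0 ((Finset.Iio j).map (Fin.succEmb r)) := by
  ext l
  simp only [Finset.mem_Iio, Finset.mem_insert, Finset.mem_map, Fin.succEmb]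
  constructor
  · intro h
    rcases Fin.eq_zero_or_eq_succ l with h0 | ⟨k, rfl⟩
    · exact Or.inl h0
    · exact Or.inr ⟨k, by simpa [Fin.succ_lt_succ_iff] using h, rfl⟩
  · rintro (rfl | ⟨k, hk, rfl⟩)
    · exact Fin.succ_pos j
    · exact Fin.succ_lt_succ_iff.2 hk

lemma Iio_castSucc_eq {r : ℕ} (j : Fin r) :
    Finset.Iio (j.castSucc) = (Finset.Iio j).map Fin.castSuccOrderEmb.toEmbedding := by
  ext l
  simp only [Finset.mem_Iio, Finset.mem_map, Fin.castSuccOrderEmb, OrderEmbedding.coe_ofStrictMono,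
    Function.Embedding.coeFn_mk, RelEmbedding.coe_toEmbedding]
  constructor
  · intro h
    rcases Fin.exists_castSucc_eq.2 (Fin.ne_last_of_lt (lt_of_lt_of_le h (Fin.le_last _))) with ⟨k, rfl⟩
    exact ⟨k, by simpa [Fin.castSucc_lt_castSucc_iff] using h, rfl⟩
  · rintro ⟨k, hk, rfl⟩
    exact Fin.castSucc_lt_castSucc_iff.2 hk

lemma Iio_last_eq {r : ℕ} :
    Finset.Iio (Fin.last r) = Finset.univ.map Fin.castSuccOrderEmb.toEmbedding := by
  ext l
  simp only [Finset.mem_Iio, Finset.mem_map, Finset.mem_univ, true_and]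
  constructor
  · intro h
    rcases Fin.exists_castSucc_eq.2 (Fin.ne_last_of_lt h) with ⟨k, rfl⟩
    exact ⟨k, rfl⟩
  · rintro ⟨k, rfl⟩
    exact Fin.castSucc_lt_last k

lemma tupleVal_succ (p : ℕ) {N r : ℕ} (a : Fin N → ℕ) (f : Fin (r+1) → Fin N) :
    tupleVal p a f = a (f 0) + p ^ ((f 0 : ℕ) + 1) * tupleVal p a (fun t => f t.succ) := by
  rw [tupleVal, Fin.sum_univ_succ]
  have h0 : Finset.Iio (0 : Fin (r+1)) = ∅ := by ext l; simp [Fin.pos_iff_ne_zero]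
  rw [h0]
  simp only [Finset.sum_empty, pow_zero, one_mul]
  congr 1
  rw [tupleVal, Finset.mul_sum]
  refine Finset.sum_congr rfl fun j _ => ?_
  rw [Iio_succ_eq, Finset.sum_insert (by simp [Fin.succ_ne_zero]), Finset.sum_map]
  simp only [Fin.succEmb, Function.Embedding.coeFn_mk]
  ring

lemma tupleVal_last (p : ℕ) {N r : ℕ} (a : Fin N → ℕ) (f : Fin (r+1) → Fin N) :
    tupleVal p a f = tupleVal p a (fun t => f t.castSucc)
      + p ^ (tupleWeight (fun t : Fin r => f t.castSucc)) * a (f (Fin.last r)) := by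
  rw [tupleVal, Fin.sum_univ_castSucc]
  congr 1
  · rw [tupleVal]
    refine Finset.sum_congr rfl fun j _ => ?_
    rw [Iio_castSucc_eq, Finset.sum_map]
    rfl
  · rw [Iio_last_eq, Finset.sum_map, tupleWeight]
    rfl

lemma tupleWeight_succ {N r : ℕ} (f : Fin (r+1) → Fin N) :
    tupleWeight f = ((f 0 : ℕ) + 1) + tupleWeight (fun t => f t.succ) := by
  rw [tupleWeight, Fin.sum_univ_succ, tupleWeight]

lemma tupleWeight_last {N r : ℕ} (f : Fin (r+1) → Fin N) :
    tupleWeight f = tupleWeight (fun t : Fin r => f t.castSucc) + ((f (Fin.last r) : ℕ) + 1) := by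
  rw [tupleWeight, Fin.sum_univ_castSucc, tupleWeight]

/-- If `I` and `J` both minimize `ν` over `{1,…,N}^r`, then their weights differ
by less than `N`. -/
theorem weights_of_minimizers_close
    (p N r : ℕ) (hp : 2 ≤ p) (hN : 2 ≤ N) (hr : 1 ≤ r)
    (a : Fin N → ℕ) (ha : ∀ i, 0 < a i)
    (I J : Fin r → Fin N)
    (hI : ∀ K : Fin r → Fin N, tupleVal p a I ≤ tupleVal p a K)
    (hJ : ∀ K : Fin r → Fin N, tupleVal p a J ≤ tupleVal p a K) :
    |(tupleWeight I : ℤ) - (tupleWeight J : ℤ)| < N := by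
  obtain ⟨r', rfl⟩ : ∃ r', r = r' + 1 := ⟨r - 1, by omega⟩
  -- a minimum of a
  obtain ⟨m, -, hm⟩ := Finset.exists_min_image Finset.univ a ⟨⟨0, by omega⟩, Finset.mem_univ _⟩
  have hm' : ∀ i, a m ≤ a i := fun i => hm i (Finset.mem_univ i)
  -- key upper bound: for a minimizer f, ν(f) < p^{μ(f)} * a m
  have upper : ∀ f : Fin (r'+1) → Fin N,
      (∀ K : Fin (r'+1) → Fin N, tupleVal p a f ≤ tupleVal p a K) →
      tupleVal p a f < p ^ (tupleWeight f) * a m := by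
    intro f hf
    set K : Fin (r'+1) → Fin N := Fin.snoc (fun t => f t.succ) m with hK
    have hKc : (fun t : Fin r' => K t.castSucc) = fun t => f t.succ := by
      funext t; simp [hK, Fin.snoc_castSucc]
    have hKl : K (Fin.last r') = m := by simp [hK]
    have hνK : tupleVal p a K = tupleVal p a (fun t => f t.succ)
        + p ^ (tupleWeight (fun t : Fin r' => f t.succ)) * a m := by
      rw [tupleVal_last, hKc, hKl]
    have hνf := tupleVal_succ p a f
    have hμf := tupleWeight_succ f
    have hle := hf K
    -- multiply inequaliy ν(f) ≤ ν(K) by p^{v1}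
    have key : p ^ ((f 0 : ℕ) + 1) * tupleVal p a f + a (f 0)
        ≤ tupleVal p a f + p ^ (tupleWeight f) * a m := by
      calc p ^ ((f 0 : ℕ) + 1) * tupleVal p a f + a (f 0)
          ≤ p ^ ((f 0 : ℕ) + 1) * tupleVal p a K + a (f 0) := by
            exact Nat.add_le_add_right (Nat.mul_le_mul_left (p ^ ((f 0 : ℕ) + 1)) hle) _
        _ = tupleVal p a f + p ^ (tupleWeight f) * a m := by
            rw [hνK, hνf, hμf, Nat.mul_add, pow_add, Nat.mul_assoc]
            ring
    have hp1 : 2 ≤ p ^ ((f 0 : ℕ) + 1) := le_trans hp (Nat.le_self_pow (by omega) p)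
    have hν1 : 1 ≤ tupleVal p a f := by
      have h0 := ha (f 0)
      rw [hνf]
      omega
    have ha0 : 1 ≤ a (f 0) := ha _
    nlinarith [key, hp1, hν1, ha0, Nat.mul_le_mul_right (tupleVal p a f) hp1]
  -- key lower bound: p^{μ(f)} * a m ≤ p^N * ν(f) for any f
  have lower : ∀ f : Fin (r'+1) → Fin N,
      p ^ (tupleWeight f) * a m ≤ p ^ N * tupleVal p a f := by
    intro f
    have h1 := tupleVal_last p a f
    have h2 := tupleWeight_last f
    have hle : ((f (Fin.last r') : ℕ) + 1) ≤ N := (f (Fin.last r')).isLt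
    calc p ^ (tupleWeight f) * a m
        = p ^ (tupleWeight (fun t : Fin r' => f t.castSucc)) * p ^ ((f (Fin.last r') : ℕ) + 1) * a m := by
          rw [h2, pow_add]
      _ ≤ p ^ (tupleWeight (fun t : Fin r' => f t.castSucc)) * p ^ N * a (f (Fin.last r')) := by
          exact Nat.mul_le_mul (Nat.mul_le_mul_left _ (Nat.pow_le_pow_right (by omega) hle)) (hm' _)
      _ = p ^ N * (p ^ (tupleWeight (fun t : Fin r' => f t.castSucc)) * a (f (Fin.last r'))) := by ring
      _ ≤ p ^ N * tupleVal p a f := by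
          apply Nat.mul_le_mul_left
          omega
  -- now combine
  have hIJ : tupleVal p a I = tupleVal p a J := le_antisymm (hI J) (hJ I)
  have main : ∀ f g : Fin (r'+1) → Fin N,
      (∀ K : Fin (r'+1) → Fin N, tupleVal p a f ≤ tupleVal p a K) → tupleVal p a f = tupleVal p a g →
      tupleWeight g < tupleWeight f + N := by
    intro f g hf hfg
    by_contra h
    push_neg at h
    have h1 := upper f hf
    have h2 := lower g
    have h3 : p ^ (tupleWeight f + N) ≤ p ^ (tupleWeight g) :=
      Nat.pow_le_pow_right (by omega) h
    rw [pow_add] at h3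
    have := Nat.mul_le_mul_right (a m) h3
    rw [hfg] at h1
    have h4 : p ^ N * tupleVal p a g < p ^ N * (p ^ tupleWeight f * a m) := by
      have hpN : 0 < p ^ N := Nat.pow_pos (by omega)
      exact mul_lt_mul_of_pos_left h1 hpN
    nlinarith [h2, this, h4]
  have hA := main I J hI hIJ
  have hB := main J I hJ hIJ.symm
  rw [abs_lt]
  constructor <;> [push_cast; push_cast] <;> omega
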